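/- For d ≤ n, the symmetric tensor rank of the elementary symmetric polynomial σ_{d,n} over ℂ is at least C(n, ⌊d/2⌋). -/

import Mathlib

open MvPolynomial Finset

section Aux

variable {n : ℕ}


theorem pderiv_pderiv' {σ R : Type*} [CommSemiring R] [DecidableEq σ] (i j : σ)
    (p : MvPolynomial σ R) : pderiv i (pderiv j p) = pderiv j (pderiv i p) := by
  induction p using MvPolynomial.induction_on' with
  | monomial s a =>
    rcases eq_or_ne i j with rfl | hij
    · rfl
    · simp only [pderiv_monomial]
      have h1 : ((s - Finsupp.single j 1) : σ →₀ ℕ) i = s i := by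
        rw [Finsupp.tsub_apply, Finsupp.single_apply, if_neg (Ne.symm hij)]; rfl
      have h2 : ((s - Finsupp.single i 1) : σ →₀ ℕ) j = s j := by
        rw [Finsupp.tsub_apply, Finsupp.single_apply, if_neg hij]; rfl
      rw [h1, h2, tsub_right_comm, mul_right_comm]
  | add p q hp hq => simp [hp, hq]

/-- iterated partial derivative over a finset of variables, as a linear endomorphism -/
noncomputable def DS' (S : Finset (Fin n)) :
    Module.End ℂ (MvPolynomial (Fin n) ℂ) :=
  S.noncommProd (fun j => ((pderiv j).toLinearMap : Module.End ℂ (MvPolynomial (Fin n) ℂ)))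
    (fun a _ b _ _ => LinearMap.ext fun p =>
      show pderiv a (pderiv b p) = pderiv b (pderiv a p) from pderiv_pderiv' a b p)

theorem DS'_empty : DS' (n := n) ∅ = 1 := Finset.noncommProd_empty _ _

theorem DS'_insert {S : Finset (Fin n)} {j : Fin n} (hj : j ∉ S) (p : MvPolynomial (Fin n) ℂ) :
    DS' (insert j S) p = pderiv j (DS' S p) := by
  unfold DS'
  exact LinearMap.congr_fun (Finset.noncommProd_insert_of_notMem _ _ _ _ hj) p

noncomputable def linf (a : Fin n → ℂ) : MvPolynomial (Fin n) ℂ := ∑ j, C (a j) * X j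

theorem pderiv_linf (a : Fin n → ℂ) (i : Fin n) : pderiv i (linf a) = C (a i) := by
  unfold linf
  rw [map_sum]
  rw [Finset.sum_eq_single i]
  · rw [pderiv_C_mul, pderiv_X_self, mul_one]
  · intro j _ hji
    rw [pderiv_C_mul, pderiv_X_of_ne hji, mul_zero]
  · intro h; exact absurd (Finset.mem_univ i) h

theorem DS'_pow (a : Fin n → ℂ) (S : Finset (Fin n)) :
    ∀ e : ℕ, ∃ c : ℂ, DS' S (linf a ^ e) = c • linf a ^ (e - S.card) := by
  classical
  induction S using Finset.induction_on with
  | empty => intro e; exact ⟨1, by simp [DS'_empty]⟩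
  | @insert j S hj ih =>
    intro e
    obtain ⟨c, hc⟩ := ih e
    refine ⟨c * ((e - S.card : ℕ) : ℂ) * a j, ?_⟩
    rw [DS'_insert hj, hc, Derivation.map_smul, pderiv_pow, pderiv_linf]
    rw [Finset.card_insert_of_notMem hj, ← Nat.sub_sub]
    rw [smul_eq_C_mul, smul_eq_C_mul, map_mul, map_mul, ← C_eq_coe_nat]
    ring

theorem pderiv_prod_X (i : Fin n) (B : Finset (Fin n)) :
    pderiv i (∏ j ∈ B, (X j : MvPolynomial (Fin n) ℂ)) =
      if i ∈ B then ∏ j ∈ B.erase i, (X j : MvPolynomial (Fin n) ℂ) else 0 := by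
  classical
  induction B using Finset.induction_on with
  | empty => simp
  | @insert b B hb ih =>
    rw [Finset.prod_insert hb, pderiv_mul, ih]
    rcases eq_or_ne i b with rfl | hib
    · rw [pderiv_X_self, if_neg hb, if_pos (Finset.mem_insert_self i B), one_mul, mul_zero,
        add_zero, Finset.erase_insert hb]
    · rw [pderiv_X_of_ne (Ne.symm hib), zero_mul, zero_add]
      by_cases hiB : i ∈ B
      · rw [if_pos hiB, if_pos (Finset.mem_insert_of_mem hiB),
          Finset.erase_insert_of_ne (Ne.symm hib),
          Finset.prod_insert (fun h => hb (Finset.mem_of_mem_erase h))]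
      · rw [if_neg hiB, mul_zero, if_neg (by simp [hib, hiB])]

theorem DS'_prod_X (S A : Finset (Fin n)) :
    DS' S (∏ j ∈ A, (X j : MvPolynomial (Fin n) ℂ)) =
      if S ⊆ A then ∏ j ∈ A \ S, (X j : MvPolynomial (Fin n) ℂ) else 0 := by
  classical
  induction S using Finset.induction_on with
  | empty => simp [DS'_empty]
  | @insert b S hb ih =>
    rw [DS'_insert hb, ih]
    by_cases hS : S ⊆ A
    · rw [if_pos hS, pderiv_prod_X]
      by_cases hbA : b ∈ A
      · have hbAS : b ∈ A \ S := Finset.mem_sdiff.2 ⟨hbA, hb⟩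
        rw [if_pos hbAS, if_pos (Finset.insert_subset hbA hS)]
        congr 1
        ext x
        simp only [Finset.mem_sdiff, Finset.mem_erase, Finset.mem_insert]
        tauto
      · rw [if_neg (fun h => hbA (Finset.mem_sdiff.1 h).1),
          if_neg (fun h => hbA (h (Finset.mem_insert_self b S)))]
    · rw [if_neg hS, map_zero, if_neg (fun h => hS (Finset.subset_insert b S |>.trans h))]

theorem DS'_esymm (S : Finset (Fin n)) (d : ℕ) (hS : S.card ≤ d) :
    DS' S (esymm (Fin n) ℂ d) =
      ∑ B ∈ (univ \ S).powersetCard (d - S.card), ∏ j ∈ B, (X j : MvPolynomial (Fin n) ℂ) := by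
  classical
  rw [esymm, map_sum]
  simp_rw [DS'_prod_X]
  rw [Finset.sum_ite, Finset.sum_const_zero, add_zero]
  refine Finset.sum_nbij' (fun A => A \ S) (fun B => B ∪ S) ?_ ?_ ?_ ?_ ?_
  · intro A hA
    simp only [Finset.mem_filter, Finset.mem_powersetCard] at hA
    obtain ⟨⟨hAu, hAc⟩, hSA⟩ := hA
    rw [Finset.mem_powersetCard]
    constructor
    · intro x hx
      rw [Finset.mem_sdiff] at hx ⊢
      exact ⟨Finset.mem_univ x, hx.2⟩
    · rw [Finset.card_sdiff_of_subset hSA, hAc]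
  · intro B hB
    rw [Finset.mem_powersetCard] at hB
    obtain ⟨hBu, hBc⟩ := hB
    have hdisj : Disjoint B S := by
      rw [Finset.disjoint_right]
      intro x hxS hxB
      exact (Finset.mem_sdiff.1 (hBu hxB)).2 hxS
    simp only [Finset.mem_filter, Finset.mem_powersetCard]
    refine ⟨⟨Finset.subset_univ _, ?_⟩, Finset.subset_union_right⟩
    rw [Finset.card_union_of_disjoint hdisj, hBc]
    omega
  · intro A hA
    simp only [Finset.mem_filter] at hA
    show A \ S ∪ S = A
    rw [Finset.sdiff_union_of_subset hA.2]
  · intro B hB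
    rw [Finset.mem_powersetCard] at hB
    have hdisj : Disjoint B S := by
      rw [Finset.disjoint_right]
      intro x hxS hxB
      exact (Finset.mem_sdiff.1 (hB.1 hxB)).2 hxS
    show (B ∪ S) \ S = B
    rw [Finset.union_sdiff_right, Finset.sdiff_eq_self_of_disjoint hdisj]
  · intro A hA
    rfl

section Comb

variable {k : ℕ} (c : Finset (Fin n) → ℂ)


/-- `g c k T = ∑_{|S|=k, S ∩ T = ∅} c S` -/
noncomputable def gg (k : ℕ) (T : Finset (Fin n)) : ℂ :=
  ∑ S ∈ (univ.powersetCard k).filter (fun S => Disjoint S T), c S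

theorem gg_step (T : Finset (Fin n)) :
    ∑ x ∈ univ \ T, gg c k (insert x T) = (n - T.card - k : ℕ) • gg c k T := by
  classical
  have h1 : ∀ x, x ∈ univ \ T → gg c k (insert x T) =
      ∑ S ∈ (univ.powersetCard k).filter (fun S => Disjoint S T),
        if x ∉ S then c S else 0 := by
    intro x _
    rw [gg, ← Finset.sum_filter, Finset.filter_filter]
    congr 1
    apply Finset.filter_congr
    intro S _
    rw [Finset.disjoint_insert_right]
    tauto
  rw [Finset.sum_congr rfl h1, Finset.sum_comm]
  rw [gg, Finset.smul_sum]
  apply Finset.sum_congr rfl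
  intro S hS
  simp only [Finset.mem_filter, Finset.mem_powersetCard] at hS
  obtain ⟨⟨hSu, hSc⟩, hdisj⟩ := hS
  rw [← Finset.sum_filter]
  rw [Finset.sum_const]
  congr 1
  have : (univ \ T).filter (fun x => x ∉ S) = univ \ (T ∪ S) := by
    ext x
    simp only [Finset.mem_filter, Finset.mem_sdiff, Finset.mem_univ, Finset.mem_union, true_and]
    tauto
  rw [this, Finset.card_sdiff_of_subset (Finset.subset_univ _), Finset.card_univ, Fintype.card_fin,
    Finset.card_union_of_disjoint (Finset.disjoint_right.2 fun a ha => Finset.disjoint_left.1 hdisj ha),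
    hSc, Nat.sub_sub]

theorem gg_moebius (S0 : Finset (Fin n)) (hS0 : S0 ∈ univ.powersetCard k) :
    ∑ T ∈ S0.powerset, (-1 : ℂ) ^ T.card * gg c k T = c S0 := by
  classical
  have step1 : ∀ T ∈ S0.powerset,
      (-1 : ℂ) ^ T.card * gg c k T =
      ∑ S ∈ univ.powersetCard k, if Disjoint S T then (-1 : ℂ) ^ T.card * c S else 0 := by
    intro T _
    rw [gg, Finset.mul_sum, ← Finset.sum_filter]
  rw [Finset.sum_congr rfl step1, Finset.sum_comm]
  have step2 : ∀ S ∈ univ.powersetCard k,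
      (∑ T ∈ S0.powerset, if Disjoint S T then (-1 : ℂ) ^ T.card * c S else 0) =
      (if S0 \ S = ∅ then (1:ℂ) else 0) * c S := by
    intro S _
    rw [← Finset.sum_filter]
    have hpf : S0.powerset.filter (fun T => Disjoint S T) = (S0 \ S).powerset := by
      ext T
      simp only [Finset.mem_filter, Finset.mem_powerset, Finset.subset_sdiff]
      rw [disjoint_comm]
    rw [hpf, ← Finset.sum_mul]
    have hz := congrArg (Int.cast : ℤ → ℂ)
      (Finset.sum_powerset_neg_one_pow_card (x := S0 \ S))
    push_cast at hz
    rw [hz]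
  rw [Finset.sum_congr rfl step2]
  rw [Finset.sum_eq_single S0]
  · rw [if_pos (Finset.sdiff_eq_empty_iff_subset.2 (le_refl S0)), one_mul]
  · intro S hS hne
    rw [Finset.mem_powersetCard] at hS hS0
    have : ¬ (S0 \ S = ∅) := by
      intro h
      exact hne (Finset.eq_of_subset_of_card_le (Finset.sdiff_eq_empty_iff_subset.1 h)
        (by rw [hS.2, hS0.2])).symm
    rw [if_neg this, zero_mul]
  · intro h
    exact absurd hS0 h

theorem gg_all_zero {m : ℕ} (hkm : k + m ≤ n)
    (h : ∀ T ∈ univ.powersetCard m, gg c k T = 0) :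
    ∀ i, ∀ T : Finset (Fin n), T.card + i = m → gg c k T = 0 := by
  intro i
  induction i with
  | zero =>
    intro T hT
    exact h T (Finset.mem_powersetCard.2 ⟨Finset.subset_univ _, by omega⟩)
  | succ i ih =>
    intro T hT
    have hw : (n - T.card - k : ℕ) ≠ 0 := by
      have hTcard : T.card ≤ n := by
        simpa using Finset.card_le_card (Finset.subset_univ T)
      omega
    have hstep := gg_step (k := k) c T
    have hzero : ∑ x ∈ univ \ T, gg c k (insert x T) = 0 := by
      apply Finset.sum_eq_zero
      intro x hx
      rw [Finset.mem_sdiff] at hx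
      exact ih _ (by rw [Finset.card_insert_of_notMem hx.2]; omega)
    rw [hzero] at hstep
    have := hstep.symm
    rw [smul_eq_zero] at this
    rcases this with h1 | h2
    · exact absurd (by exact_mod_cast h1) hw
    · exact h2

end Comb

theorem sum_sign_between {α : Type*} [DecidableEq α] (R A : Finset α) (hRA : R ⊆ A) :
    ∑ B ∈ A.powerset.filter (fun B => R ⊆ B), (-1 : ℂ) ^ (A.card - B.card) =
      if R = A then 1 else 0 := by
  have hre : ∑ B ∈ A.powerset.filter (fun B => R ⊆ B), (-1 : ℂ) ^ (A.card - B.card) =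
      ∑ C ∈ (A \ R).powerset, (-1 : ℂ) ^ ((A \ R).card - C.card) := by
    refine Finset.sum_nbij' (fun B => B \ R) (fun C => C ∪ R) ?_ ?_ ?_ ?_ ?_
    · intro B hB
      simp only [Finset.mem_filter, Finset.mem_powerset] at hB
      exact Finset.mem_powerset.2 (Finset.sdiff_subset_sdiff hB.1 (le_refl R))
    · intro C hC
      rw [Finset.mem_powerset, Finset.subset_sdiff] at hC
      simp only [Finset.mem_filter, Finset.mem_powerset]
      exact ⟨Finset.union_subset hC.1 hRA, Finset.subset_union_right⟩
    · intro B hB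
      simp only [Finset.mem_filter, Finset.mem_powerset] at hB
      show B \ R ∪ R = B
      rw [Finset.sdiff_union_of_subset hB.2]
    · intro C hC
      rw [Finset.mem_powerset, Finset.subset_sdiff] at hC
      show (C ∪ R) \ R = C
      rw [Finset.union_sdiff_right, Finset.sdiff_eq_self_of_disjoint hC.2]
    · intro B hB
      simp only [Finset.mem_filter, Finset.mem_powerset] at hB
      congr 1
      rw [Finset.card_sdiff_of_subset hRA, Finset.card_sdiff_of_subset hB.2]
      have := Finset.card_le_card hB.1
      have := Finset.card_le_card hB.2
      omega
  rw [hre]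
  have hpt : ∀ C ∈ (A \ R).powerset, (-1 : ℂ) ^ ((A \ R).card - C.card) =
      (-1 : ℂ) ^ (A \ R).card * (-1 : ℂ) ^ C.card := by
    intro C hC
    rw [Finset.mem_powerset] at hC
    have h1 := Finset.card_le_card hC
    rw [← pow_add]
    have h2 : (A \ R).card - C.card + 2 * C.card = (A \ R).card + C.card := by omega
    rw [← h2, pow_add, pow_mul, neg_one_sq, one_pow, mul_one]
  rw [Finset.sum_congr rfl hpt, ← Finset.mul_sum]
  have hz := congrArg (Int.cast : ℤ → ℂ)
    (Finset.sum_powerset_neg_one_pow_card (x := A \ R))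
  push_cast at hz
  rw [hz]
  by_cases h : A \ R = ∅
  · rw [if_pos h, mul_one, h, Finset.card_empty, pow_zero,
      if_pos (Finset.Subset.antisymm hRA (Finset.sdiff_eq_empty_iff_subset.1 h))]
  · rw [if_neg h, mul_zero, if_neg]
    intro hra
    exact h (by rw [hra, Finset.sdiff_self])

theorem linf_indicator (B : Finset (Fin n)) :
    linf (fun j => if j ∈ B then (1:ℂ) else 0) = ∑ j ∈ B, (X j : MvPolynomial (Fin n) ℂ) := by
  rw [linf]
  have : ∀ j ∈ (Finset.univ : Finset (Fin n)),
      C (if j ∈ B then (1:ℂ) else 0) * X j = if j ∈ B then (X j : MvPolynomial (Fin n) ℂ) else 0 := by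
    intro j _
    split <;> simp
  rw [Finset.sum_congr rfl this, Finset.sum_ite_mem, Finset.univ_inter]

theorem prod_X_mem_span (A : Finset (Fin n)) :
    ∏ j ∈ A, (X j : MvPolynomial (Fin n) ℂ) ∈
      Submodule.span ℂ {q | ∃ a : Fin n → ℂ, q = (linf a) ^ A.card} := by
  classical
  set d := A.card with hd
  set P : MvPolynomial (Fin n) ℂ :=
    ∑ B ∈ A.powerset, (-1 : ℂ) ^ (d - B.card) • (∑ j ∈ B, X j) ^ d with hP
  set F := (Fintype.piFinset (fun _ : Fin d => A)).filter
    (fun p => Finset.image p Finset.univ = A) with hF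
  have hPF : P = (F.card : ℕ) • ∏ j ∈ A, (X j : MvPolynomial (Fin n) ℂ) := by
    have e1 : ∀ B ∈ A.powerset, ((-1 : ℂ) ^ (d - B.card)) • (∑ j ∈ B, (X j : MvPolynomial (Fin n) ℂ)) ^ d =
        ∑ p ∈ Fintype.piFinset (fun _ : Fin d => A),
          (if ∀ i, p i ∈ B then ((-1 : ℂ) ^ (d - B.card)) • ∏ i, (X (p i) : MvPolynomial (Fin n) ℂ) else 0) := by
      intro B hB
      rw [Finset.mem_powerset] at hB
      have h2 : ((∑ j ∈ B, X j : MvPolynomial (Fin n) ℂ)) ^ d =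
          ∑ p ∈ Fintype.piFinset (fun _ : Fin d => B), ∏ i, (X (p i) : MvPolynomial (Fin n) ℂ) := by
        rw [← Finset.prod_univ_sum]
        rw [Finset.prod_const, Finset.card_univ, Fintype.card_fin]
      have h3 : Fintype.piFinset (fun _ : Fin d => B) =
          (Fintype.piFinset (fun _ : Fin d => A)).filter (fun p => ∀ i, p i ∈ B) := by
        ext p
        simp only [Fintype.mem_piFinset, Finset.mem_filter]
        exact ⟨fun h => ⟨fun i => hB (h i), h⟩, fun h => h.2⟩
      rw [h2, h3, Finset.sum_filter, Finset.smul_sum]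
      apply Finset.sum_congr rfl
      intro p _
      split <;> simp
    rw [hP, Finset.sum_congr rfl e1, Finset.sum_comm]
    have e2 : ∀ p ∈ Fintype.piFinset (fun _ : Fin d => A),
        (∑ B ∈ A.powerset, if ∀ i, p i ∈ B then ((-1 : ℂ) ^ (d - B.card)) • ∏ i, (X (p i) : MvPolynomial (Fin n) ℂ) else 0)
        = (if Finset.image p Finset.univ = A then (1:ℂ) else 0) • ∏ i, (X (p i) : MvPolynomial (Fin n) ℂ) := by
      intro p hp
      have hcond : ∀ B, (∀ i, p i ∈ B) ↔ Finset.image p Finset.univ ⊆ B := by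
        intro B
        constructor
        · intro h x hx
          obtain ⟨i, _, rfl⟩ := Finset.mem_image.1 hx
          exact h i
        · intro h i
          exact h (Finset.mem_image.2 ⟨i, Finset.mem_univ i, rfl⟩)
      have : ∀ B ∈ A.powerset, (if ∀ i, p i ∈ B then ((-1 : ℂ) ^ (d - B.card)) • ∏ i, (X (p i) : MvPolynomial (Fin n) ℂ) else 0)
          = (if Finset.image p Finset.univ ⊆ B then ((-1 : ℂ) ^ (d - B.card)) else 0) • ∏ i, (X (p i) : MvPolynomial (Fin n) ℂ) := by
        intro B _
        rw [if_congr (hcond B) rfl rfl]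
        split <;> simp
      rw [Finset.sum_congr rfl this, ← Finset.sum_smul, ← Finset.sum_filter]
      congr 1
      apply sum_sign_between
      intro x hx
      obtain ⟨i, _, rfl⟩ := Finset.mem_image.1 hx
      exact Fintype.mem_piFinset.1 hp i
    rw [Finset.sum_congr rfl e2]
    have e3 : ∀ p ∈ Fintype.piFinset (fun _ : Fin d => A),
        ((if Finset.image p Finset.univ = A then (1:ℂ) else 0) • ∏ i, (X (p i) : MvPolynomial (Fin n) ℂ))
        = if Finset.image p Finset.univ = A then ∏ j ∈ A, (X j : MvPolynomial (Fin n) ℂ) else 0 := by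
      intro p hp
      by_cases h : Finset.image p Finset.univ = A
      · rw [if_pos h, if_pos h, one_smul]
        have hinj : Set.InjOn p ↑(Finset.univ : Finset (Fin d)) := by
          apply Finset.injOn_of_card_image_eq
          rw [h, Finset.card_univ, Fintype.card_fin, hd]
        rw [← h, Finset.prod_image (fun x hx y hy hxy => hinj hx hy hxy)]
      · rw [if_neg h, if_neg h, zero_smul]
    rw [Finset.sum_congr rfl e3, ← Finset.sum_filter, ← hF, Finset.sum_const]
  have hcard : F.card ≠ 0 := by
    apply Finset.card_ne_zero_of_mem (a := fun i => ((A.equivFin.symm i : A) : Fin n))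
    rw [hF, Finset.mem_filter]
    constructor
    · rw [Fintype.mem_piFinset]
      intro i
      exact (A.equivFin.symm i).2
    · apply Finset.Subset.antisymm
      · intro x hx
        obtain ⟨i, _, rfl⟩ := Finset.mem_image.1 hx
        exact (A.equivFin.symm i).2
      · intro a ha
        refine Finset.mem_image.2 ⟨A.equivFin ⟨a, ha⟩, Finset.mem_univ _, ?_⟩
        rw [Equiv.symm_apply_apply]
  have hmemP : P ∈ Submodule.span ℂ {q : MvPolynomial (Fin n) ℂ | ∃ a : Fin n → ℂ, q = (linf a) ^ A.card} := by
    rw [hP]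
    apply Submodule.sum_mem
    intro B _
    apply Submodule.smul_mem
    apply Submodule.subset_span
    exact ⟨fun j => if j ∈ B then (1:ℂ) else 0, by rw [linf_indicator]⟩
  have heq : ∏ j ∈ A, (X j : MvPolynomial (Fin n) ℂ) = ((F.card : ℂ))⁻¹ • P := by
    rw [hPF, ← Nat.cast_smul_eq_nsmul ℂ, inv_smul_smul₀ (Nat.cast_ne_zero.2 hcard)]
  rw [heq]
  exact Submodule.smul_mem _ _ hmemP

theorem linf_smul (r : ℂ) (a : Fin n → ℂ) :
    linf (fun j => r * a j) = C r * linf a := by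
  rw [linf, linf, Finset.mul_sum]
  apply Finset.sum_congr rfl
  intro j _
  rw [map_mul, mul_assoc]

theorem exists_waring (d : ℕ) :
    ∃ s, ∃ L : Fin s → Fin n → ℂ,
      esymm (Fin n) ℂ d = ∑ i, (∑ j, C (L i j) * X j) ^ d := by
  classical
  rcases Nat.eq_zero_or_pos d with rfl | hd
  · exact ⟨1, fun _ _ => 0, by simp [esymm_zero]⟩
  have hspan : esymm (Fin n) ℂ d ∈
      Submodule.span ℂ {q : MvPolynomial (Fin n) ℂ | ∃ a : Fin n → ℂ, q = (linf a) ^ d} := by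
    rw [esymm]
    apply Submodule.sum_mem
    intro A hA
    have hAc : A.card = d := (Finset.mem_powersetCard.1 hA).2
    have := prod_X_mem_span A
    rwa [hAc] at this
  rw [Submodule.mem_span_set] at hspan
  obtain ⟨c, hsub, hsum⟩ := hspan
  have hchoice : ∀ q ∈ c.support, ∃ a : Fin n → ℂ, q = (linf a) ^ d := fun q hq => hsub hq
  choose a ha using hchoice
  have hroot : ∀ q ∈ c.support, ∃ r : ℂ, r ^ d = c q :=
    fun q _ => IsAlgClosed.exists_pow_nat_eq (c q) hd
  choose r hr using hroot
  set s := c.support.card with hs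
  set e := c.support.equivFin with he
  refine ⟨s, fun i j => r (e.symm i) (e.symm i).2 * a (e.symm i) (e.symm i).2 j, ?_⟩
  have hterm : ∀ q : c.support,
      (∑ j, C (r q q.2 * a q q.2 j) * X j) ^ d = c (q : MvPolynomial (Fin n) ℂ) • (q : MvPolynomial (Fin n) ℂ) := by
    intro q
    have h1 : (∑ j, C (r q q.2 * a q q.2 j) * X j) = C (r q q.2) * linf (a q q.2) :=
      linf_smul _ _
    rw [h1, mul_pow, ← map_pow, hr q q.2, ← ha q q.2, smul_eq_C_mul]
  calc esymm (Fin n) ℂ d = c.sum fun mi r => r • mi := hsum.symm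
    _ = ∑ q ∈ c.support, c q • q := rfl
    _ = ∑ q : c.support, c (q : MvPolynomial (Fin n) ℂ) • (q : MvPolynomial (Fin n) ℂ) :=
        (Finset.sum_coe_sort c.support _).symm
    _ = ∑ i : Fin s, c ((e.symm i : MvPolynomial (Fin n) ℂ)) • ((e.symm i : c.support) : MvPolynomial (Fin n) ℂ) :=
        (Equiv.sum_comp e.symm _).symm
    _ = ∑ i : Fin s, (∑ j, C (r (e.symm i) (e.symm i).2 * a (e.symm i) (e.symm i).2 j) * X j) ^ d := by
        apply Finset.sum_congr rfl
        intro i _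
        rw [hterm (e.symm i)]

noncomputable def ind (B : Finset (Fin n)) : Fin n →₀ ℕ := ∑ j ∈ B, Finsupp.single j 1

theorem ind_apply (B : Finset (Fin n)) (x : Fin n) :
    ind B x = if x ∈ B then 1 else 0 := by
  rw [ind, Finsupp.finset_sum_apply]
  simp_rw [Finsupp.single_apply]
  rw [Finset.sum_ite_eq' B x (fun _ => 1)]

theorem ind_inj {B T : Finset (Fin n)} (h : ind B = ind T) : B = T := by
  ext x
  have := congrArg (fun f : Fin n →₀ ℕ => f x) h
  simp only [ind_apply] at this
  by_cases hB : x ∈ B <;> by_cases hT : x ∈ T <;> simp [hB, hT] at this ⊢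

theorem prod_X_eq_monomial' (B : Finset (Fin n)) :
    ∏ j ∈ B, (X j : MvPolynomial (Fin n) ℂ) = monomial (ind B) 1 := by
  classical
  induction B using Finset.induction_on with
  | empty => simp [ind]
  | @insert b B hb ih =>
    have hins : ind (insert b B) = Finsupp.single b 1 + ind B := by
      rw [ind, ind, Finset.sum_insert hb]
    rw [Finset.prod_insert hb, ih, hins, X, monomial_mul, one_mul]

theorem coeff_fS (S T : Finset (Fin n)) (m : ℕ) (hT : T ∈ univ.powersetCard m) :
    coeff (ind T) (∑ B ∈ (univ \ S).powersetCard m, ∏ j ∈ B, (X j : MvPolynomial (Fin n) ℂ)) =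
      if Disjoint S T then 1 else 0 := by
  classical
  rw [Finset.sum_congr rfl (fun B _ => prod_X_eq_monomial' B), MvPolynomial.coeff_sum]
  have h1 : ∀ B ∈ (univ \ S).powersetCard m,
      coeff (ind T) ((monomial (ind B)) (1:ℂ)) = if B = T then 1 else 0 := by
    intro B _
    rw [coeff_monomial]
    by_cases h : B = T
    · rw [if_pos h, if_pos (by rw [h])]
    · rw [if_neg h, if_neg (fun hh => h (ind_inj hh))]
  rw [Finset.sum_congr rfl h1, Finset.sum_ite_eq' _ T (fun _ => (1:ℂ))]
  rw [Finset.mem_powersetCard] at hT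
  congr 1
  rw [eq_iff_iff, Finset.mem_powersetCard, Finset.subset_sdiff]
  constructor
  · intro h
    exact Disjoint.symm h.1.2
  · intro h
    exact ⟨⟨Finset.subset_univ _, Disjoint.symm h⟩, hT.2⟩

end Aux

/-- The symmetric tensor (Waring) rank of a form `F ∈ ℂ[x_1,…,x_n]` of degree `d`:
the least `s` such that `F = ∑_{i=1}^s L_i^d` with `L_i` linear forms. -/
noncomputable def waringRank {n : ℕ} (d : ℕ) (F : MvPolynomial (Fin n) ℂ) : ℕ :=
  sInf {s | ∃ L : Fin s → Fin n → ℂ, F = ∑ i, (∑ j, C (L i j) * X j) ^ d}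

/-- For `d ≤ n`, the Waring rank of `σ_{d,n}` is at least `C(n, ⌊d/2⌋)`. -/
theorem waringRank_esymm_ge (d n : ℕ) (hd : d ≤ n) :
    n.choose (d / 2) ≤ waringRank d (esymm (Fin n) ℂ d) := by
  classical
  set k := d / 2 with hk
  set m := d - k with hm
  have hkm : k + m = d := by omega
  have hkm' : k ≤ m := by omega
  apply le_csInf
  · obtain ⟨s, L, hL⟩ := exists_waring (n := n) d
    exact ⟨s, L, hL⟩
  rintro s ⟨L, hL⟩
  -- the span of the (d-k)-th powers
  set V : Submodule ℂ (MvPolynomial (Fin n) ℂ) :=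
    Submodule.span ℂ (Set.range fun i : Fin s => (linf (L i)) ^ m) with hV
  have hVfin : FiniteDimensional ℂ V := FiniteDimensional.span_of_finite ℂ (Set.finite_range _)
  -- each derivative of esymm lies in V
  set fS : Finset (Fin n) → MvPolynomial (Fin n) ℂ :=
    fun S => ∑ B ∈ (univ \ S).powersetCard m, ∏ j ∈ B, (X j : MvPolynomial (Fin n) ℂ) with hfS
  have hmemV : ∀ S ∈ univ.powersetCard k, fS S ∈ V := by
    intro S hS
    have hSc : S.card = k := (Finset.mem_powersetCard.1 hS).2
    have h1 : fS S = DS' S (esymm (Fin n) ℂ d) := by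
      rw [DS'_esymm S d (by omega), hSc]
    have h2 : esymm (Fin n) ℂ d = ∑ i, linf (L i) ^ d := hL
    rw [h1, h2, map_sum]
    apply Submodule.sum_mem
    intro i _
    obtain ⟨c, hc⟩ := DS'_pow (L i) S d
    rw [hc, hSc]
    have : d - k = m := by omega
    rw [this]
    exact Submodule.smul_mem _ _ (Submodule.subset_span ⟨i, rfl⟩)
  -- linear independence of the fS
  have hli : LinearIndependent ℂ (fun S : ↥(univ.powersetCard k (α := Fin n)) => fS (S : Finset (Fin n))) := by
    rw [Fintype.linearIndependent_iff]
    intro co hco S0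
    set cc : Finset (Fin n) → ℂ :=
      fun S => if h : S ∈ univ.powersetCard k (α := Fin n) then co ⟨S, h⟩ else 0 with hcc
    have hgg : ∀ T ∈ univ.powersetCard m (α := Fin n), gg cc k T = 0 := by
      intro T hT
      have hcoeff := congrArg (coeff (ind T)) hco
      rw [coeff_zero, MvPolynomial.coeff_sum] at hcoeff
      have h3 : ∀ S : ↥(univ.powersetCard k (α := Fin n)),
          coeff (ind T) (co S • fS (S : Finset (Fin n))) =
            co S * (if Disjoint (S : Finset (Fin n)) T then 1 else 0) := by
        intro S
        rw [coeff_smul, coeff_fS _ T m hT, smul_eq_mul]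
      rw [Fintype.sum_congr _ _ h3] at hcoeff
      have h4 : ∀ S : ↥(univ.powersetCard k (α := Fin n)),
          (if Disjoint (S : Finset (Fin n)) T then cc (S : Finset (Fin n)) else 0) =
            co S * (if Disjoint (S : Finset (Fin n)) T then 1 else 0) := by
        intro S
        rw [hcc]
        simp only [S.2, dif_pos, mul_ite, mul_one, mul_zero]
      rw [gg, Finset.sum_filter, ← Finset.sum_coe_sort, Fintype.sum_congr _ _ h4]
      exact hcoeff
    have hgg2 := gg_all_zero cc (by omega) hgg
    have hS0c : (S0 : Finset (Fin n)).card = k := (Finset.mem_powersetCard.1 S0.2).2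
    have hmo := gg_moebius cc (S0 : Finset (Fin n)) S0.2
    have hz : ∀ T ∈ (S0 : Finset (Fin n)).powerset, (-1 : ℂ) ^ T.card * gg cc k T = 0 := by
      intro T hT
      rw [Finset.mem_powerset] at hT
      have hTc : T.card ≤ k := hS0c ▸ Finset.card_le_card hT
      rw [hgg2 (m - T.card) T (by omega), mul_zero]
    rw [Finset.sum_congr rfl hz, Finset.sum_const_zero] at hmo
    have : cc (S0 : Finset (Fin n)) = co S0 := by
      rw [hcc]
      simp only [S0.2, dif_pos]
    rw [this] at hmo
    exact hmo.symm
  -- conclude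
  have hcard : Fintype.card ↥(univ.powersetCard k (α := Fin n)) = n.choose k := by
    rw [Fintype.card_coe, Finset.card_powersetCard, Finset.card_univ, Fintype.card_fin]
  have hfV : ∀ S : ↥(univ.powersetCard k (α := Fin n)), fS (S : Finset (Fin n)) ∈ V :=
    fun S => hmemV _ S.2
  set fV : ↥(univ.powersetCard k (α := Fin n)) → V := fun S => ⟨fS (S : Finset (Fin n)), hfV S⟩ with hfVdef
  have hliV : LinearIndependent ℂ fV := by
    apply LinearIndependent.of_comp V.subtype
    exact hli
  have h5 : Fintype.card ↥(univ.powersetCard k (α := Fin n)) ≤ Module.finrank ℂ V :=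
    LinearIndependent.fintype_card_le_finrank hliV
  have h6 : Module.finrank ℂ V ≤ s := by
    have := finrank_range_le_card (R := ℂ) (fun i : Fin s => (linf (L i)) ^ m)
    rwa [Fintype.card_fin] at this
  omega
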